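/- Let 𝔘 be a Banach algebra whose unitization 𝔘♯ is symmetrically pseudo-amenable with a symmetric approximate diagonal {t_λ}, and let X be a Banach 𝔘-bimodule such that for each x ∈ X the net {ψ_x(t_λ)} is bounded and for each bounded Jordan derivation D : 𝔘 → X the net {Φ_D(t_λ)} is bounded. Then every bounded Jordan derivation from 𝔘 to X is a derivation. -/

import Mathlib

open Filter Topology

universe u

/-- A realization of the projective Banach-space tensor square `A ⊗̂ A` of a (non-unital)
Banach algebra `A`, together with the canonical bimodule operations `a•t`, `t•a`, the
"opposite" operations `a∘t`, `t∘a`, the product maps `π`, `π°` and the flip map, each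
characterized by its values on elementary tensors.  The norm is the projective tensor norm:
`‖a ⊗ b‖ ≤ ‖a‖‖b‖` and every element is an absolutely convergent sum of elementary tensors
whose total norm is arbitrarily close to its norm; moreover bounded bilinear maps lift. -/
structure ProjTensorSquare (A : Type u) [NonUnitalNormedRing A] [NormedSpace ℂ A]
    [IsScalarTower ℂ A A] [SMulCommClass ℂ A A] [CompleteSpace A] where
  /-- the underlying Banach space of `A ⊗̂ A` -/
  T : Type u
  [nacg : NormedAddCommGroup T]
  [nsp : NormedSpace ℂ T]
  [cplt : CompleteSpace T]
  /-- the canonical bilinear map `(a, b) ↦ a ⊗ b` -/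
  tmul : A →L[ℂ] A →L[ℂ] T
  norm_tmul_le : ∀ a b : A, ‖tmul a b‖ ≤ ‖a‖ * ‖b‖
  /-- the projective norm property -/
  exists_rep : ∀ (t : T) (ε : ℝ), 0 < ε → ∃ u v : ℕ → A,
      Summable (fun n => ‖u n‖ * ‖v n‖) ∧ HasSum (fun n => tmul (u n) (v n)) t ∧
      ∑' n, ‖u n‖ * ‖v n‖ ≤ ‖t‖ + ε
  /-- the universal property: bounded bilinear maps into a Banach space lift to `T` -/
  lift : ∀ {X : Type u} [NormedAddCommGroup X] [NormedSpace ℂ X] [CompleteSpace X]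
      (f : A →L[ℂ] A →L[ℂ] X), ∃ g : T →L[ℂ] X, (∀ a b, g (tmul a b) = f a b) ∧ ‖g‖ ≤ ‖f‖
  /-- the left module action: `a • (b ⊗ c) = (a * b) ⊗ c` -/
  lmul : A → T →L[ℂ] T
  lmul_tmul : ∀ a b c, lmul a (tmul b c) = tmul (a * b) c
  /-- the right module action: `(b ⊗ c) • a = b ⊗ (c * a)` -/
  rmul : A → T →L[ℂ] T
  rmul_tmul : ∀ a b c, rmul a (tmul b c) = tmul b (c * a)
  /-- the left opposite action: `a ∘ (b ⊗ c) = b ⊗ (a * c)` -/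
  lcirc : A → T →L[ℂ] T
  lcirc_tmul : ∀ a b c, lcirc a (tmul b c) = tmul b (a * c)
  /-- the right opposite action: `(b ⊗ c) ∘ a = (b * a) ⊗ c` -/
  rcirc : A → T →L[ℂ] T
  rcirc_tmul : ∀ a b c, rcirc a (tmul b c) = tmul (b * a) c
  /-- the product map `π : b ⊗ c ↦ b * c` -/
  π : T →L[ℂ] A
  π_tmul : ∀ b c, π (tmul b c) = b * c
  /-- the opposite product map `π° : b ⊗ c ↦ c * b` -/
  πop : T →L[ℂ] A
  πop_tmul : ∀ b c, πop (tmul b c) = c * b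
  /-- the flip map `(b ⊗ c)° = c ⊗ b` -/
  flip : T →L[ℂ] T
  flip_tmul : ∀ b c, flip (tmul b c) = tmul c b

attribute [instance] ProjTensorSquare.nacg ProjTensorSquare.nsp ProjTensorSquare.cplt

namespace ProjTensorSquare

variable {A : Type u} [NonUnitalNormedRing A] [NormedSpace ℂ A]
    [IsScalarTower ℂ A A] [SMulCommClass ℂ A A] [CompleteSpace A]

/-- `t` is an approximate diagonal for `A` consisting of symmetric tensors, along the
filter `l`:  each `t i` is symmetric, `a • tᵢ - tᵢ • a → 0` and `π(tᵢ) a → a` for all `a`. -/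
def IsSymmApproxDiagonal (P : ProjTensorSquare A) {ι : Type u} (l : Filter ι)
    (t : ι → P.T) : Prop :=
  (∀ i, P.flip (t i) = t i) ∧
  (∀ a : A, Tendsto (fun i => P.lmul a (t i) - P.rmul a (t i)) l (𝓝 0)) ∧
  (∀ a : A, Tendsto (fun i => P.π (t i) * a) l (𝓝 a))

/-- A Banach algebra is symmetrically pseudo-amenable if it has a (not necessarily bounded)
approximate diagonal consisting of symmetric tensors. -/
def SymmPseudoAmenable (P : ProjTensorSquare A) : Prop :=
  ∃ (ι : Type u) (l : Filter ι) (t : ι → P.T), l.NeBot ∧ P.IsSymmApproxDiagonal l t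

end ProjTensorSquare

/-- A Banach `A`-bimodule: a Banach space with commuting bounded left and right `A`-actions. -/
structure BanachBimodule (A X : Type u) [NonUnitalNormedRing A] [NormedSpace ℂ A]
    [NormedAddCommGroup X] [NormedSpace ℂ X] where
  /-- the left action `(a, x) ↦ a • x` -/
  lsmul : A →L[ℂ] X →L[ℂ] X
  /-- the right action `(a, x) ↦ x • a` -/
  rsmul : A →L[ℂ] X →L[ℂ] X
  lsmul_mul : ∀ a b x, lsmul (a * b) x = lsmul a (lsmul b x)
  rsmul_mul : ∀ a b x, rsmul (a * b) x = rsmul b (rsmul a x)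
  lsmul_rsmul : ∀ a b x, lsmul a (rsmul b x) = rsmul b (lsmul a x)

namespace BanachBimodule

variable {A X : Type u} [NonUnitalNormedRing A] [NormedSpace ℂ A]
  [NormedAddCommGroup X] [NormedSpace ℂ X]

/-- `D(ab) = D(a)·b + a·D(b)` -/
def IsDerivation (M : BanachBimodule A X) (D : A → X) : Prop :=
  ∀ a b, D (a * b) = M.rsmul b (D a) + M.lsmul a (D b)

/-- `D(ab + ba) = D(a)·b + a·D(b) + D(b)·a + b·D(a)` -/
def IsJordanDerivation (M : BanachBimodule A X) (D : A → X) : Prop :=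
  ∀ a b, D (a * b + b * a) =
    M.rsmul b (D a) + M.lsmul a (D b) + M.rsmul a (D b) + M.lsmul b (D a)

/-- `D(ab − ba) = D(a)·b + a·D(b) − D(b)·a − b·D(a)` -/
def IsLieDerivation (M : BanachBimodule A X) (D : A → X) : Prop :=
  ∀ a b, D (a * b - b * a) =
    M.rsmul b (D a) + M.lsmul a (D b) - M.rsmul a (D b) - M.lsmul b (D a)

/-- the center `Z_𝔘(X) = {x ∈ X | a·x = x·a for all a ∈ 𝔘}` -/
def center (M : BanachBimodule A X) : Set X := {x | ∀ a, M.lsmul a x = M.rsmul a x}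

/-- the left action extended to the `ℓ¹`-unitization `𝔘♯`, via `1 • x = x` -/
noncomputable def uLsmul (M : BanachBimodule A X) (a : WithLp 1 (Unitization ℂ A)) (x : X) : X :=
  (WithLp.equiv 1 (Unitization ℂ A) a).fst • x + M.lsmul ((WithLp.equiv 1 (Unitization ℂ A)) a).snd x

/-- the right action extended to the `ℓ¹`-unitization `𝔘♯`, via `x • 1 = x` -/
noncomputable def uRsmul (M : BanachBimodule A X) (a : WithLp 1 (Unitization ℂ A)) (x : X) : X :=
  (WithLp.equiv 1 (Unitization ℂ A) a).fst • x + M.rsmul ((WithLp.equiv 1 (Unitization ℂ A)) a).snd x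

end BanachBimodule

namespace Statement12

variable {A X : Type u} [NonUnitalNormedRing A] [NormedSpace ℂ A]
    [IsScalarTower ℂ A A] [SMulCommClass ℂ A A] [CompleteSpace A]
    [NormedAddCommGroup X] [NormedSpace ℂ X] [CompleteSpace X]

local notation "B" => WithLp 1 (Unitization ℂ A)

/-- first coordinate as a CLM on the ℓ¹-unitization -/
noncomputable def fstL : B →L[ℂ] ℂ :=
  LinearMap.mkContinuous
    { toFun := fun x => (WithLp.equiv 1 (Unitization ℂ A) x).fst
      map_add' := fun x y => by simp [WithLp.ofLp_add, Unitization.fst_add]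
      map_smul' := fun c x => by simp [WithLp.ofLp_smul, Unitization.fst_smul] } 1
    (fun x => by
      rw [one_mul, WithLp.unitization_norm_def]
      exact le_add_of_nonneg_right (norm_nonneg _))

/-- second coordinate as a CLM on the ℓ¹-unitization -/
noncomputable def sndL : B →L[ℂ] A :=
  LinearMap.mkContinuous
    { toFun := fun x => (WithLp.equiv 1 (Unitization ℂ A) x).snd
      map_add' := fun x y => by simp [WithLp.ofLp_add, Unitization.snd_add]
      map_smul' := fun c x => by simp [WithLp.ofLp_smul, Unitization.snd_smul] } 1
    (fun x => by
      rw [one_mul, WithLp.unitization_norm_def]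
      exact le_add_of_nonneg_left (norm_nonneg _))

@[simp] lemma fstL_apply (x : B) : fstL x = (WithLp.equiv 1 (Unitization ℂ A) x).fst := rfl
@[simp] lemma sndL_apply (x : B) : sndL (A := A) x = (WithLp.equiv 1 (Unitization ℂ A) x).snd := rfl

lemma fstL_mul (x y : B) : fstL (x * y) = fstL x * fstL y := by
  simp [WithLp.unitization_mul, Unitization.fst_mul]

lemma sndL_mul (x y : B) : sndL (x * y) =
    fstL x • sndL y + fstL y • sndL x + sndL x * sndL y := by
  simp [WithLp.unitization_mul, Unitization.snd_mul]

lemma fstL_one : fstL (A := A) 1 = 1 := rfl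
lemma sndL_one : sndL (A := A) 1 = 0 := rfl

variable (M : BanachBimodule A X)

/-- the left action of the unitization, as a continuous bilinear map -/
noncomputable def Lc : B →L[ℂ] X →L[ℂ] X :=
  ((ContinuousLinearMap.lsmul ℂ ℂ : ℂ →L[ℂ] X →L[ℂ] X)).comp fstL + M.lsmul.comp sndL

/-- the right action of the unitization, as a continuous bilinear map -/
noncomputable def Rc : B →L[ℂ] X →L[ℂ] X :=
  ((ContinuousLinearMap.lsmul ℂ ℂ : ℂ →L[ℂ] X →L[ℂ] X)).comp fstL + M.rsmul.comp sndL

lemma Lc_apply (a : B) (x : X) : Lc M a x = fstL a • x + M.lsmul (sndL a) x := rfl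
lemma Rc_apply (a : B) (x : X) : Rc M a x = fstL a • x + M.rsmul (sndL a) x := rfl

lemma equiv_one : WithLp.equiv 1 (Unitization ℂ A) 1 = 1 := rfl

lemma Lc_one (x : X) : Lc M 1 x = x := by
  rw [Lc_apply, fstL_apply, sndL_apply, equiv_one]
  simp

lemma Rc_one (x : X) : Rc M 1 x = x := by
  rw [Rc_apply, fstL_apply, sndL_apply, equiv_one]
  simp

lemma Lc_mul (a b : B) (x : X) : Lc M (a * b) x = Lc M a (Lc M b x) := by
  simp only [Lc_apply, fstL_mul, sndL_mul, map_add, map_smul, smul_add,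
    ContinuousLinearMap.add_apply, ContinuousLinearMap.smul_apply, M.lsmul_mul]
  module

lemma Rc_mul (a b : B) (x : X) : Rc M (a * b) x = Rc M b (Rc M a x) := by
  simp only [Rc_apply, fstL_mul, sndL_mul, map_add, map_smul, smul_add,
    ContinuousLinearMap.add_apply, ContinuousLinearMap.smul_apply, M.rsmul_mul]
  module

lemma Lc_Rc (a b : B) (x : X) : Lc M a (Rc M b x) = Rc M b (Lc M a x) := by
  simp only [Lc_apply, Rc_apply, map_add, map_smul, smul_add, M.lsmul_rsmul]
  module

variable (D : A →L[ℂ] X)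

/-- extension of `D` to the unitization, with `D 1 = 0` -/
noncomputable def Dt : B →L[ℂ] X := D.comp sndL

lemma Dt_apply (a : B) : Dt D a = D (sndL a) := rfl

lemma Dt_one : Dt (A := A) D 1 = 0 := by
  rw [Dt_apply, sndL_one, map_zero]

/-- cancellation of doubling -/
lemma half {x y : X} (h : x + x = y + y) : x = y := by
  have h2 : (2 : ℂ) • x = (2 : ℂ) • y := by rw [two_smul, two_smul]; exact h
  exact smul_right_injective X two_ne_zero h2

variable {D} in
lemma jordanExt (hD : M.IsJordanDerivation D) (a b : B) :
    Dt D (a * b + b * a) =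
      Rc M b (Dt D a) + Lc M a (Dt D b) + Rc M a (Dt D b) + Lc M b (Dt D a) := by
  have key := hD (sndL a) (sndL b)
  have harg : sndL (a * b + b * a) =
      (sndL a * sndL b + sndL b * sndL a) +
        ((fstL a • sndL b + fstL b • sndL a) + (fstL b • sndL a + fstL a • sndL b)) := by
    rw [map_add, sndL_mul, sndL_mul]; module
  rw [Dt_apply, harg, map_add, key]
  simp only [map_add, map_smul, Lc_apply, Rc_apply, Dt_apply]
  module

/-- the defect of `D` being a derivation -/
noncomputable def del (a b : B) : X := Dt D (a * b) - Rc M b (Dt D a) - Lc M a (Dt D b)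

variable {D}

lemma del_antisym (hD : M.IsJordanDerivation D) (a b : B) :
    del M D a b = - del M D b a := by
  have h := jordanExt M hD a b
  rw [map_add] at h
  have e : Dt D (a * b) =
      (Rc M b (Dt D a) + Lc M a (Dt D b) + Rc M a (Dt D b) + Lc M b (Dt D a))
        - Dt D (b * a) := by
    rw [eq_sub_iff_add_eq]; exact h
  simp only [del, e]; abel

lemma del_cocycle (a b c : B) :
    del M D (a * b) c - del M D a (b * c) =
      Lc M a (del M D b c) - Rc M c (del M D a b) := by
  simp only [del, map_sub, Lc_Rc, Lc_mul, Rc_mul, mul_assoc]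
  abel

lemma Dt_sq (hD : M.IsJordanDerivation D) (a : B) :
    Dt D (a * a) = Rc M a (Dt D a) + Lc M a (Dt D a) := by
  apply half
  have h := jordanExt M hD a a
  rw [map_add] at h
  rw [h]; abel

lemma Dt_aba (hD : M.IsJordanDerivation D) (a b : B) :
    Dt D (a * b * a) =
      Lc M (a * b) (Dt D a) + Lc M a (Rc M a (Dt D b)) + Rc M (b * a) (Dt D a) := by
  apply half
  have e1 := jordanExt M hD a (a * b + b * a)
  have hexp : a * (a * b + b * a) + (a * b + b * a) * a =
      (a * a * b + b * (a * a)) + (a * b * a + a * b * a) := by noncomm_ring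
  rw [hexp, map_add, map_add, map_add] at e1
  -- e1 : (Dt (a*a*b) + Dt (b*(a*a))) + (Dt (a*b*a) + Dt (a*b*a)) = R1
  have e4 := jordanExt M hD (a * a) b
  rw [map_add] at e4
  have e2 := jordanExt M hD a b
  have e3 := Dt_sq M hD a
  have e8 : Dt D (a * b * a) + Dt D (a * b * a) =
      (Rc M (a * b + b * a) (Dt D a) + Lc M a (Dt D (a * b + b * a)) +
        Rc M a (Dt D (a * b + b * a)) + Lc M (a * b + b * a) (Dt D a)) -
        (Dt D (a * a * b) + Dt D (b * (a * a))) := by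
    rw [eq_sub_iff_add_eq, add_comm]; exact e1
  rw [e8, e4, e2, e3]
  simp only [map_add, map_sub, ContinuousLinearMap.add_apply, Lc_mul, Rc_mul, Lc_Rc]
  abel

lemma Dt_polar (hD : M.IsJordanDerivation D) (x y z : B) :
    Dt D (x * y * z + z * y * x) =
      Lc M (x * y) (Dt D z) + Lc M (z * y) (Dt D x) + Lc M x (Rc M z (Dt D y)) +
        Lc M z (Rc M x (Dt D y)) + Rc M (y * z) (Dt D x) + Rc M (y * x) (Dt D z) := by
  have h := Dt_aba M hD (x + z) y
  have hexp : (x + z) * y * (x + z) = x * y * x + (x * y * z + z * y * x) + z * y * z := by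
    noncomm_ring
  rw [hexp, map_add, map_add, Dt_aba M hD x y, Dt_aba M hD z y] at h
  -- h : (known x-part) + Dt (x*y*z + z*y*x) + (known z-part) = RHS(x+z)
  have key : Lc M ((x + z) * y) (Dt D (x + z)) + Lc M (x + z) (Rc M (x + z) (Dt D y)) +
      Rc M (y * (x + z)) (Dt D (x + z)) =
      (Lc M (x * y) (Dt D x) + Lc M x (Rc M x (Dt D y)) + Rc M (y * x) (Dt D x)) +
      (Lc M (x * y) (Dt D z) + Lc M (z * y) (Dt D x) + Lc M x (Rc M z (Dt D y)) +
        Lc M z (Rc M x (Dt D y)) + Rc M (y * z) (Dt D x) + Rc M (y * x) (Dt D z)) +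
      (Lc M (z * y) (Dt D z) + Lc M z (Rc M z (Dt D y)) + Rc M (y * z) (Dt D z)) := by
    simp only [add_mul, mul_add, map_add, ContinuousLinearMap.add_apply]
    abel
  rw [key] at h
  exact add_left_cancel (add_right_cancel h)

lemma identC (hD : M.IsJordanDerivation D) (x y c : B) :
    del M D (x * y) c + del M D c (y * x) =
      Lc M c (del M D x y) - Rc M c (del M D x y) := by
  have hxy := jordanExt M hD x y
  rw [map_add] at hxy
  have hyx : Dt D (y * x) =
      (Rc M y (Dt D x) + Lc M x (Dt D y) + Rc M x (Dt D y) + Lc M y (Dt D x))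
        - Dt D (x * y) := by
    rw [eq_sub_iff_add_eq, add_comm]; exact hxy
  have hpolar := Dt_polar M hD x y c
  have e1 : Dt D (x * y * c) =
      (Lc M (x * y) (Dt D c) + Lc M (c * y) (Dt D x) + Lc M x (Rc M c (Dt D y)) +
        Lc M c (Rc M x (Dt D y)) + Rc M (y * c) (Dt D x) + Rc M (y * x) (Dt D c))
        - Dt D (c * (y * x)) := by
    rw [eq_sub_iff_add_eq]
    rw [show c * (y * x) = c * y * x by rw [mul_assoc], ← map_add]
    exact hpolar
  simp only [del]
  rw [e1, hyx]
  simp only [map_sub, map_add, Lc_mul, Rc_mul, Lc_Rc]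
  abel


/-- Jacobi-type identity for the commutator action -/
lemma jacobi (p q : B) (y : X) :
    Lc M (p * q - q * p) y - Rc M (p * q - q * p) y =
      (Lc M p (Lc M q y - Rc M q y) - Rc M p (Lc M q y - Rc M q y)) -
      (Lc M q (Lc M p y - Rc M p y) - Rc M q (Lc M p y - Rc M p y)) := by
  simp only [map_sub, ContinuousLinearMap.sub_apply, Lc_mul, Rc_mul, Lc_Rc]
  abel

lemma del_one_left (a : B) : del M D 1 a = 0 := by
  simp [del, Dt_one, Lc_one, map_zero]

variable (D)

/-- `(a, b) ↦ δ(a, b)` as a continuous bilinear map -/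
noncomputable def delL : B →L[ℂ] B →L[ℂ] X :=
  (ContinuousLinearMap.compL ℂ B B X (Dt D)).comp (ContinuousLinearMap.mul ℂ B)
    - (Rc M).flip.comp (Dt D) - ((Lc M).flip.comp (Dt D)).flip

lemma delL_apply (a b : B) : delL M D a b = del M D a b := rfl

/-- `(a, b) ↦ a · D(b)` as a continuous bilinear map -/
noncomputable def phiL : B →L[ℂ] B →L[ℂ] X := ((Lc M).flip.comp (Dt D)).flip

lemma phiL_apply (a b : B) : phiL M D a b = Lc M a (Dt D b) := rfl

/-- `(a, b) ↦ D(a) · b` as a continuous bilinear map -/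
noncomputable def phiL' : B →L[ℂ] B →L[ℂ] X := (Rc M).flip.comp (Dt D)

lemma phiL'_apply (a b : B) : phiL' M D a b = Rc M b (Dt D a) := rfl

/-- `(a, b) ↦ a · x · b` as a continuous bilinear map -/
noncomputable def psiL (x : X) : B →L[ℂ] B →L[ℂ] X :=
  ((Lc M).flip.comp ((Rc M).flip x)).flip

lemma psiL_apply (x : X) (a b : B) : psiL M x a b = Lc M a (Rc M b x) := rfl

/-- two CLMs agreeing on elementary tensors agree everywhere -/
lemma eq_on_T {Y : Type*} [NormedAddCommGroup Y] [NormedSpace ℂ Y]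
    (P : ProjTensorSquare B) (f g : P.T →L[ℂ] Y)
    (h : ∀ a b, f (P.tmul a b) = g (P.tmul a b)) (s : P.T) : f s = g s := by
  obtain ⟨u, v, -, hsum, -⟩ := P.exists_rep s 1 one_pos
  have h1 := hsum.mapL f
  have h2 := hsum.mapL g
  refine h1.unique ?_
  simpa [← h] using h2


lemma tendsto_clm_comp {ι : Type*} {l : Filter ι} {Y Z : Type u}
    [NormedAddCommGroup Y] [NormedSpace ℂ Y] [NormedAddCommGroup Z] [NormedSpace ℂ Z]
    (f : Y →L[ℂ] Z) {u : ι → Y} {y : Y} (h : Filter.Tendsto u l (nhds y)) :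
    Filter.Tendsto (fun i => f (u i)) l (nhds (f y)) := by
  simpa only [Function.comp_def] using (f.continuous.tendsto y).comp h

lemma tendsto_clm_sub {ι : Type*} {l : Filter ι} {Y Z : Type u}
    [NormedAddCommGroup Y] [NormedSpace ℂ Y] [NormedAddCommGroup Z] [NormedSpace ℂ Z]
    (f : Y →L[ℂ] Z) {u v : ι → Y} (h : Filter.Tendsto (fun i => u i - v i) l (nhds 0)) :
    Filter.Tendsto (fun i => f (u i) - f (v i)) l (nhds 0) := by
  have h2 := tendsto_clm_comp f h
  simp only [map_sub, map_zero] at h2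
  exact h2

end Statement12


open Statement12

set_option maxHeartbeats 2000000 in
/-- Let `𝔘` be a Banach algebra whose unitization `𝔘♯` (with the `ℓ¹`-norm)
is symmetrically pseudo-amenable with a symmetric approximate diagonal `{t_λ}`, and let `X` be
a Banach `𝔘`-bimodule such that for each `x ∈ X` the net `{ψ_x(t_λ)}` is bounded and for each
bounded Jordan derivation `D : 𝔘 → X` the net `{Φ_D(t_λ)}` is bounded (where
`ψ_x(a ⊗ b) = a x b` and `Φ_D(a ⊗ b) = a D(b)` on `𝔘♯ ⊗̂ 𝔘♯`, with `D(1) = 0`).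
Then every bounded Jordan derivation from `𝔘` to `X` is a derivation. -/
theorem jordanDerivation_isDerivation {A X : Type u} [NonUnitalNormedRing A] [NormedSpace ℂ A]
    [IsScalarTower ℂ A A] [SMulCommClass ℂ A A] [CompleteSpace A]
    [NormedAddCommGroup X] [NormedSpace ℂ X] [CompleteSpace X]
    (P : ProjTensorSquare (WithLp 1 (Unitization ℂ A))) (M : BanachBimodule A X)
    {ι : Type u} (l : Filter ι) [l.NeBot] (t : ι → P.T)
    (ht : P.IsSymmApproxDiagonal l t)
    (hψ : ∀ x : X, ∀ g : P.T →L[ℂ] X,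
      (∀ a b, g (P.tmul a b) = M.uLsmul a (M.uRsmul b x)) → ∃ C, ∀ i, ‖g (t i)‖ ≤ C)
    (hΦ : ∀ D : A →L[ℂ] X, M.IsJordanDerivation D → ∀ g : P.T →L[ℂ] X,
      (∀ a b, g (P.tmul a b) =
        M.uLsmul a (D ((WithLp.equiv 1 (Unitization ℂ A)) b).snd)) →
      ∃ C, ∀ i, ‖g (t i)‖ ≤ C) :
    ∀ D : A →L[ℂ] X, M.IsJordanDerivation D → M.IsDerivation D := by
  intro D hD
  obtain ⟨hflip, hlr, happ⟩ := ht
  -- the three basic lifts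
  obtain ⟨gd, hgd0, -⟩ := P.lift (delL M D)
  obtain ⟨gp, hgp0, -⟩ := P.lift (phiL M D)
  obtain ⟨gq, hgq0, -⟩ := P.lift (phiL' M D)
  have hgd : ∀ a b, gd (P.tmul a b) = del M D a b := fun a b => hgd0 a b
  have hgp : ∀ a b, gp (P.tmul a b) = Lc M a (Dt D b) := fun a b => hgp0 a b
  have hgq : ∀ a b, gq (P.tmul a b) = Rc M b (Dt D a) := fun a b => hgq0 a b
  clear hgd0 hgp0 hgq0
  have h0 : ∀ x : X, ∃ g : P.T →L[ℂ] X, ∀ a b, g (P.tmul a b) = Lc M a (Rc M b x) := by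
    intro x
    obtain ⟨g, hg, -⟩ := P.lift (psiL M x)
    exact ⟨g, fun a b => hg a b⟩
  choose Ψ hΨ using h0
  -- basic limit facts
  have hπ1 : Tendsto (fun i => P.π (t i)) l (𝓝 (1 : WithLp 1 (Unitization ℂ A))) := by
    simpa using happ 1
  -- flip intertwining identities
  have hI1 : ∀ (a : WithLp 1 (Unitization ℂ A)) s,
      P.flip (P.lmul a s) = P.lcirc a (P.flip s) := by
    intro a s
    have := eq_on_T P (P.flip.comp (P.lmul a)) ((P.lcirc a).comp P.flip)
      (fun p q => by simp [P.lmul_tmul, P.flip_tmul, P.lcirc_tmul]) s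
    simpa only [ContinuousLinearMap.comp_apply] using this
  have hI2 : ∀ (a : WithLp 1 (Unitization ℂ A)) s,
      P.flip (P.rmul a s) = P.rcirc a (P.flip s) := by
    intro a s
    have := eq_on_T P (P.flip.comp (P.rmul a)) ((P.rcirc a).comp P.flip)
      (fun p q => by simp [P.rmul_tmul, P.flip_tmul, P.rcirc_tmul]) s
    simpa only [ContinuousLinearMap.comp_apply] using this
  have hI3 : ∀ (a : WithLp 1 (Unitization ℂ A)) s,
      P.flip (P.lcirc a s) = P.lmul a (P.flip s) := by
    intro a s
    have := eq_on_T P (P.flip.comp (P.lcirc a)) ((P.lmul a).comp P.flip)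
      (fun p q => by simp [P.lmul_tmul, P.flip_tmul, P.lcirc_tmul]) s
    simpa only [ContinuousLinearMap.comp_apply] using this
  have hπop : ∀ i, P.πop (t i) = P.π (t i) := by
    intro i
    have := eq_on_T P P.πop (P.π.comp P.flip)
      (fun p q => by simp [P.πop_tmul, P.π_tmul, P.flip_tmul]) (t i)
    rw [ContinuousLinearMap.comp_apply, hflip i] at this
    exact this
  have hcirc : ∀ a : WithLp 1 (Unitization ℂ A),
      Tendsto (fun i => P.lcirc a (t i) - P.rcirc a (t i)) l (𝓝 0) := by
    intro a
    have h2 := tendsto_clm_sub P.flip (hlr a)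
    refine h2.congr fun i => ?_
    rw [hI1, hI2, hflip i]
  -- antisymmetry of the lift of δ
  have hdflip : ∀ s, gd (P.flip s) = - gd s := by
    intro s
    have := eq_on_T P (gd.comp P.flip) (-gd)
      (fun p q => by
        simp only [ContinuousLinearMap.comp_apply, ContinuousLinearMap.neg_apply,
          P.flip_tmul, hgd]
        exact del_antisym M hD q p) s
    simpa only [ContinuousLinearMap.comp_apply, ContinuousLinearMap.neg_apply] using this
  have hδt : ∀ i, gd (t i) = 0 := by
    intro i
    have h := hdflip (t i)
    rw [hflip i] at h
    have h2 : gd (t i) + gd (t i) = (0 : X) + 0 := by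
      nth_rewrite 2 [h]
      simp
    exact half h2
  have hgdlc : ∀ (a : WithLp 1 (Unitization ℂ A)) i,
      gd (P.lmul a (t i)) = - gd (P.lcirc a (t i)) := by
    intro a i
    have h := hdflip (P.lmul a (t i))
    rw [hI1, hflip i] at h
    rw [h, neg_neg]
  have hgdrc : ∀ (a : WithLp 1 (Unitization ℂ A)) i,
      gd (P.rcirc a (t i)) = - gd (P.rmul a (t i)) := by
    intro a i
    have h := hdflip (P.rmul a (t i))
    rw [hI2, hflip i] at h
    exact h
  -- structural identities for the lifts
  have hΦl : ∀ (a : WithLp 1 (Unitization ℂ A)) s, gp (P.lmul a s) = Lc M a (gp s) := by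
    intro a s
    have := eq_on_T P (gp.comp (P.lmul a)) ((Lc M a).comp gp)
      (fun p q => by simp [P.lmul_tmul, hgp, Lc_mul]) s
    simpa only [ContinuousLinearMap.comp_apply] using this
  have hΦ'r : ∀ (a : WithLp 1 (Unitization ℂ A)) s, gq (P.rmul a s) = Rc M a (gq s) := by
    intro a s
    have := eq_on_T P (gq.comp (P.rmul a)) ((Rc M a).comp gq)
      (fun p q => by simp [P.rmul_tmul, hgq, Rc_mul]) s
    simpa only [ContinuousLinearMap.comp_apply] using this
  have hΨl : ∀ (x : X) (b : WithLp 1 (Unitization ℂ A)) s,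
      Ψ x (P.lmul b s) = Lc M b (Ψ x s) := by
    intro x b s
    have := eq_on_T P ((Ψ x).comp (P.lmul b)) ((Lc M b).comp (Ψ x))
      (fun p q => by simp [P.lmul_tmul, hΨ, Lc_mul]) s
    simpa only [ContinuousLinearMap.comp_apply] using this
  have hΨr : ∀ (x : X) (b : WithLp 1 (Unitization ℂ A)) s,
      Ψ x (P.rmul b s) = Rc M b (Ψ x s) := by
    intro x b s
    have := eq_on_T P ((Ψ x).comp (P.rmul b)) ((Rc M b).comp (Ψ x))
      (fun p q => by simp [P.rmul_tmul, hΨ, Rc_mul, Lc_Rc]) s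
    simpa only [ContinuousLinearMap.comp_apply] using this
  have hsum9 : ∀ s, gp s + gq s = Dt D (P.π s) - gd s := by
    intro s
    have := eq_on_T P (gp + gq) ((Dt D).comp P.π - gd)
      (fun p q => by
        simp only [ContinuousLinearMap.add_apply, ContinuousLinearMap.sub_apply,
          ContinuousLinearMap.comp_apply, P.π_tmul, hgp, hgq, hgd, del]
        abel) s
    simpa only [ContinuousLinearMap.add_apply, ContinuousLinearMap.sub_apply,
      ContinuousLinearMap.comp_apply] using this
  have hE10 : ∀ (a : WithLp 1 (Unitization ℂ A)) s,
      gd (P.rmul a s) = del M D (P.π s) a - gp (P.rmul a s) + Rc M a (gp s)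
        + Lc M (P.π s) (Dt D a) + Rc M a (gd s) := by
    intro a s
    have := eq_on_T P (gd.comp (P.rmul a))
      ((((delL M D).flip a).comp P.π - gp.comp (P.rmul a) + (Rc M a).comp gp
        + ((Lc M).flip (Dt D a)).comp P.π + (Rc M a).comp gd))
      (fun p q => by
        simp only [ContinuousLinearMap.comp_apply, ContinuousLinearMap.add_apply,
          ContinuousLinearMap.sub_apply, ContinuousLinearMap.flip_apply,
          P.rmul_tmul, P.π_tmul, hgd, hgp]
        simp only [delL_apply]
        have h := (del_cocycle M (D := D) p q a).symm
        rw [← sub_eq_zero] at h ⊢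
        rw [← h]
        simp only [del, map_sub, map_add, Lc_mul, Rc_mul, Lc_Rc, mul_assoc]
        abel) s
    simpa only [ContinuousLinearMap.add_apply, ContinuousLinearMap.sub_apply,
      ContinuousLinearMap.comp_apply, ContinuousLinearMap.flip_apply, delL_apply] using this
  have hE11 : ∀ (a : WithLp 1 (Unitization ℂ A)) s,
      Ψ (Dt D a) s = gp (P.lcirc a s) - gp (P.rcirc a s) - gq (P.flip (P.lcirc a s))
        + Rc M (P.πop s) (Dt D a) + Lc M a (gq (P.flip s))
        - gd (P.flip (P.lcirc a s)) - gd (P.rmul a s) := by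
    intro a s
    have := eq_on_T P (Ψ (Dt D a))
      ((gp.comp (P.lcirc a) - gp.comp (P.rcirc a) - gq.comp (P.flip.comp (P.lcirc a))
        + ((Rc M).flip (Dt D a)).comp P.πop + (Lc M a).comp (gq.comp P.flip)
        - gd.comp (P.flip.comp (P.lcirc a)) - gd.comp (P.rmul a)))
      (fun p q => by
        simp only [ContinuousLinearMap.comp_apply, ContinuousLinearMap.add_apply,
          ContinuousLinearMap.sub_apply, ContinuousLinearMap.flip_apply,
          P.rmul_tmul, P.lcirc_tmul, P.rcirc_tmul, P.flip_tmul, P.πop_tmul,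
          hgd, hgp, hgq, hΨ]
        have h := identC M hD a q p
        rw [← sub_eq_zero] at h ⊢
        rw [← h]
        simp only [del, map_sub, map_add, Lc_mul, Rc_mul, Lc_Rc, mul_assoc]
        abel) s
    simpa only [ContinuousLinearMap.add_apply, ContinuousLinearMap.sub_apply,
      ContinuousLinearMap.comp_apply, ContinuousLinearMap.flip_apply] using this
  -- limit computations
  have h1 : ∀ a : WithLp 1 (Unitization ℂ A),
      Tendsto (fun i => gp (P.rmul a (t i)) - Lc M a (gp (t i))) l (𝓝 0) := by
    intro a
    have h3 : Tendsto (fun i => P.rmul a (t i) - P.lmul a (t i)) l (𝓝 0) := by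
      simpa using (hlr a).neg
    have h2 := tendsto_clm_sub gp h3
    refine h2.congr fun i => by rw [hΦl]
  have h1q : ∀ a : WithLp 1 (Unitization ℂ A),
      Tendsto (fun i => gq (P.lmul a (t i)) - Rc M a (gq (t i))) l (𝓝 0) := by
    intro a
    have h2 := tendsto_clm_sub gq (hlr a)
    refine h2.congr fun i => by rw [hΦ'r]
  have h2 : Tendsto (fun i => gp (t i) + gq (t i)) l (𝓝 0) := by
    have h3 : Tendsto (fun i => Dt D (P.π (t i))) l (𝓝 (Dt D 1)) :=
      tendsto_clm_comp (Dt D) hπ1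
    rw [Dt_one] at h3
    refine h3.congr fun i => ?_
    rw [hsum9 (t i), hδt i, sub_zero]
  have hK5 : ∀ a : WithLp 1 (Unitization ℂ A),
      Tendsto (fun i => Rc M (P.π (t i)) (Dt D a)) l (𝓝 (Dt D a)) := by
    intro a
    have h3 := tendsto_clm_comp ((Rc M).flip (Dt D a)) hπ1
    simpa only [ContinuousLinearMap.flip_apply, Rc_one] using h3
  have hK5L : ∀ a : WithLp 1 (Unitization ℂ A),
      Tendsto (fun i => Lc M (P.π (t i)) (Dt D a)) l (𝓝 (Dt D a)) := by
    intro a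
    have h3 := tendsto_clm_comp ((Lc M).flip (Dt D a)) hπ1
    simpa only [ContinuousLinearMap.flip_apply, Lc_one] using h3
  have hdel1 : ∀ a : WithLp 1 (Unitization ℂ A),
      Tendsto (fun i => del M D (P.π (t i)) a) l (𝓝 0) := by
    intro a
    have h3 := tendsto_clm_comp ((delL M D).flip a) hπ1
    simpa only [ContinuousLinearMap.flip_apply, delL_apply, del_one_left M] using h3
  have hP : ∀ a : WithLp 1 (Unitization ℂ A),
      Tendsto (fun i => gd (P.rmul a (t i)) + (Lc M a (gp (t i)) - Rc M a (gp (t i))))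
        l (𝓝 (Dt D a)) := by
    intro a
    have hc := ((hdel1 a).sub (h1 a)).add (hK5L a)
    have hc2 : Tendsto (fun i => del M D (P.π (t i)) a - (gp (P.rmul a (t i))
        - Lc M a (gp (t i))) + Lc M (P.π (t i)) (Dt D a)) l (𝓝 (Dt D a)) := by
      simpa using hc
    refine hc2.congr fun i => ?_
    rw [hE10 a (t i), hδt i]
    simp only [map_zero]
    abel
  -- the key limit (★)
  have hstar : ∀ a : WithLp 1 (Unitization ℂ A),
      Tendsto (fun i => Ψ (Dt D a) (t i) - (Lc M a (gp (t i)) - Rc M a (gp (t i))))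
        l (𝓝 (-(Dt D a))) := by
    intro a
    have K3 := tendsto_clm_sub gp (hcirc a)
    have K2 := tendsto_clm_sub gd (hcirc a)
    have K6 : Tendsto (fun i => Lc M a (gp (t i) + gq (t i))
        - Rc M a (gp (t i) + gq (t i))) l (𝓝 0) := by
      have h3 := tendsto_clm_comp (Lc M a - Rc M a) h2
      simpa only [ContinuousLinearMap.sub_apply, map_zero, sub_zero,
        ContinuousLinearMap.zero_apply, sub_self] using h3
    have total := ((((K3.sub (h1q a)).add (hK5 a)).add K2).add K6).sub ((hP a).add (hP a))
    rw [show (0 : X) - 0 + Dt D a + 0 + 0 - (Dt D a + Dt D a) = -(Dt D a) from by abel]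
      at total
    refine total.congr fun i => ?_
    rw [hE11 a (t i), hI3, hflip i, hπop i, hgdlc a i, hgdrc a i]
    simp only [map_add]
    abel
  -- commutation of Ψ with actions in the limit
  have hΨcomm : ∀ (x : X) (a : WithLp 1 (Unitization ℂ A)),
      Tendsto (fun i => Lc M a (Ψ x (t i)) - Rc M a (Ψ x (t i))) l (𝓝 0) := by
    intro x a
    have h3 := tendsto_clm_sub (Ψ x) (hlr a)
    refine h3.congr fun i => ?_
    rw [hΨl, hΨr]
  have hWcomm : ∀ p q : WithLp 1 (Unitization ℂ A),
      Tendsto (fun i => Lc M p (Lc M q (gp (t i)) - Rc M q (gp (t i)))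
        - Rc M p (Lc M q (gp (t i)) - Rc M q (gp (t i))))
        l (𝓝 (Lc M p (Dt D q) - Rc M p (Dt D q))) := by
    intro p q
    have h3 := tendsto_clm_comp (Lc M p - Rc M p) (hstar q)
    have h4 := (hΨcomm (Dt D q) p).sub h3
    rw [show (0 : X) - (Lc M p - Rc M p) (-(Dt D q))
        = Lc M p (Dt D q) - Rc M p (Dt D q) from by
      simp only [ContinuousLinearMap.sub_apply, map_neg]; abel] at h4
    refine h4.congr fun i => ?_
    simp only [ContinuousLinearMap.sub_apply, map_sub]
    abel
  -- centrality of δ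
  have hcent : ∀ a b c : WithLp 1 (Unitization ℂ A),
      Lc M c (del M D a b) = Rc M c (del M D a b) := by
    intro a b c
    have hWk := ((hWcomm a b).sub (hWcomm b a)).congr
      (fun i => (jacobi M a b (gp (t i))).symm)
    have hΨk : Tendsto (fun i => Ψ (Dt D (a * b - b * a)) (t i))
        l (𝓝 (-(Dt D (a * b - b * a)) + ((Lc M a (Dt D b) - Rc M a (Dt D b))
          - (Lc M b (Dt D a) - Rc M b (Dt D a))))) := by
      have h3 := (hstar (a * b - b * a)).add hWk
      refine h3.congr fun i => ?_
      abel
    have hlim2 := tendsto_clm_comp (Lc M c - Rc M c) hΨk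
    have hlim2' : Tendsto (fun i => Lc M c (Ψ (Dt D (a * b - b * a)) (t i))
        - Rc M c (Ψ (Dt D (a * b - b * a)) (t i)))
        l (𝓝 ((Lc M c - Rc M c) (-(Dt D (a * b - b * a))
          + ((Lc M a (Dt D b) - Rc M a (Dt D b))
            - (Lc M b (Dt D a) - Rc M b (Dt D a)))))) := by
      refine hlim2.congr fun i => ?_
      simp only [ContinuousLinearMap.sub_apply]
    have hz := tendsto_nhds_unique hlim2' (hΨcomm (Dt D (a * b - b * a)) c)
    have h6 : (-(Dt D (a * b - b * a)) + ((Lc M a (Dt D b) - Rc M a (Dt D b))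
        - (Lc M b (Dt D a) - Rc M b (Dt D a))))
        = -(del M D a b) + -(del M D a b) := by
      have h7 : (-(Dt D (a * b - b * a)) + ((Lc M a (Dt D b) - Rc M a (Dt D b))
          - (Lc M b (Dt D a) - Rc M b (Dt D a))))
          = -(del M D a b) + del M D b a := by
        simp only [del, map_sub]
        abel
      rw [h7, del_antisym M hD b a]
    rw [h6] at hz
    have h8 : (Lc M c (del M D a b) - Rc M c (del M D a b))
        + (Lc M c (del M D a b) - Rc M c (del M D a b)) = (0 : X) + 0 := by
      rw [add_zero]
      have := hz
      simp only [map_add, map_neg, ContinuousLinearMap.sub_apply] at this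
      rw [← neg_eq_zero, ← this]
      abel
    have h9 := half h8
    rw [← sub_eq_zero]
    exact h9
  -- the Θ = Ξ identity (uses centrality)
  have hE14 : ∀ (a : WithLp 1 (Unitization ℂ A)) s,
      gp (P.rmul a s) - Rc M a (gp s) - Lc M (P.π s) (Dt D a)
        = gq (P.rcirc a (P.flip s)) - gq (P.lcirc a (P.flip s))
          - Ψ (Dt D a) (P.flip s) := by
    intro a s
    have := eq_on_T P
      (gp.comp (P.rmul a) - (Rc M a).comp gp - ((Lc M).flip (Dt D a)).comp P.π)
      (gq.comp ((P.rcirc a).comp P.flip) - gq.comp ((P.lcirc a).comp P.flip)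
        - (Ψ (Dt D a)).comp P.flip)
      (fun p q => by
        simp only [ContinuousLinearMap.comp_apply, ContinuousLinearMap.sub_apply,
          ContinuousLinearMap.flip_apply, P.rmul_tmul, P.rcirc_tmul, P.lcirc_tmul,
          P.flip_tmul, P.π_tmul, hgp, hgq, hΨ]
        have h := hcent q a p
        rw [← sub_eq_zero] at h ⊢
        rw [← h]
        simp only [del, map_sub, map_add, Lc_mul, Rc_mul, Lc_Rc, mul_assoc]
        try abel) s
    simpa only [ContinuousLinearMap.sub_apply, ContinuousLinearMap.comp_apply,
      ContinuousLinearMap.flip_apply] using this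
  -- the commutator of Φ converges to D
  have hW : ∀ a : WithLp 1 (Unitization ℂ A),
      Tendsto (fun i => Lc M a (gp (t i)) - Rc M a (gp (t i))) l (𝓝 (Dt D a)) := by
    intro a
    have hTheta : Tendsto (fun i => (gp (P.rmul a (t i)) - Rc M a (gp (t i))
        - Lc M (P.π (t i)) (Dt D a)) - (Lc M a (gp (t i)) - Rc M a (gp (t i))))
        l (𝓝 (-(Dt D a))) := by
      have h3 := (h1 a).sub (hK5L a)
      rw [show (0 : X) - Dt D a = -(Dt D a) from by abel] at h3
      refine h3.congr fun i => ?_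
      abel
    have hXi : Tendsto (fun i => (gq (P.rcirc a (t i)) - gq (P.lcirc a (t i))
        - Ψ (Dt D a) (t i)) + (Lc M a (gp (t i)) - Rc M a (gp (t i))))
        l (𝓝 (Dt D a)) := by
      have h3 : Tendsto (fun i => P.rcirc a (t i) - P.lcirc a (t i)) l (𝓝 0) := by
        simpa using (hcirc a).neg
      have hgg := tendsto_clm_sub gq h3
      have h4 := hgg.sub (hstar a)
      rw [show (0 : X) - -(Dt D a) = Dt D a from by abel] at h4
      refine h4.congr fun i => ?_
      abel
    have hsum := hXi.sub hTheta
    rw [show Dt D a - -(Dt D a) = Dt D a + Dt D a from by abel] at hsum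
    have hsum2 : Tendsto (fun i => (Lc M a (gp (t i)) - Rc M a (gp (t i)))
        + (Lc M a (gp (t i)) - Rc M a (gp (t i)))) l (𝓝 (Dt D a + Dt D a)) := by
      refine hsum.congr fun i => ?_
      have hEq := hE14 a (t i)
      rw [hflip i] at hEq
      rw [← hEq]
      abel
    have hsmul : Tendsto (fun i => (2 : ℂ) • (Lc M a (gp (t i)) - Rc M a (gp (t i))))
        l (𝓝 ((2 : ℂ) • Dt D a)) := by
      rw [two_smul]
      refine hsum2.congr fun i => (two_smul ℂ _).symm
    have hfinal := hsmul.const_smul ((2 : ℂ)⁻¹)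
    have h2ne : (2 : ℂ) ≠ 0 := two_ne_zero
    simpa [smul_smul, inv_mul_cancel₀ h2ne] using hfinal
  -- conclusion: δ vanishes
  have hcomm : ∀ p q : WithLp 1 (Unitization ℂ A),
      Dt D (p * q - q * p) = (Lc M p (Dt D q) - Rc M p (Dt D q))
        - (Lc M q (Dt D p) - Rc M q (Dt D p)) := by
    intro p q
    have net1 := hW (p * q - q * p)
    have net2 := ((hWcomm p q).sub (hWcomm q p)).congr
      (fun i => (jacobi M p q (gp (t i))).symm)
    exact tendsto_nhds_unique net1 net2
  have hdel0 : ∀ p q : WithLp 1 (Unitization ℂ A), del M D p q = 0 := by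
    intro p q
    have h := hcomm p q
    rw [map_sub] at h
    have h0' := sub_eq_zero_of_eq h
    have hz : del M D p q + del M D p q = (0 : X) + 0 := by
      nth_rewrite 2 [del_antisym M hD p q]
      rw [zero_add, ← h0']
      simp only [del, map_sub]
      abel
    exact half hz
  -- translate back to A
  intro a0 b0
  have hsnd : ∀ x : A,
      sndL ((WithLp.equiv 1 (Unitization ℂ A)).symm (Unitization.inr x)) = x := by
    intro x
    simp [sndL_apply]
  have hfst : ∀ x : A,
      fstL ((WithLp.equiv 1 (Unitization ℂ A)).symm (Unitization.inr x)) = 0 := by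
    intro x
    simp [fstL_apply]
  have hz := hdel0 ((WithLp.equiv 1 (Unitization ℂ A)).symm (Unitization.inr a0))
    ((WithLp.equiv 1 (Unitization ℂ A)).symm (Unitization.inr b0))
  have hexp : del M D ((WithLp.equiv 1 (Unitization ℂ A)).symm (Unitization.inr a0))
      ((WithLp.equiv 1 (Unitization ℂ A)).symm (Unitization.inr b0))
      = D (a0 * b0) - M.rsmul b0 (D a0) - M.lsmul a0 (D b0) := by
    simp [del, Dt_apply, Lc_apply, Rc_apply, sndL_mul, hsnd, hfst]
  rw [hexp] at hz
  rw [sub_sub, sub_eq_zero] at hz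
  exact hz
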